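/- arXiv:2007.13210 — 4 statements merged into one kernel-verified Lean document; each statement's English description precedes it below -/
import Mathlib

section
/- Let d ∈ {2,3} and s ∈ [0, 1/2]. There exists a constant C > 0, depending only on d and s, such that for all k, t > 0 with kt ≥ 1 and all measurable functions F, G : ℝ^d → [0, ∞), ∫_{Ω_I} k² (1 + ‖ξ‖²)^s / |den_{k,t}(ξ)| · F(ξ) G(ξ) dξ ≤ C k^{2s} t^{2s−2} ‖F‖_{L²(ℝ^d)} ‖G‖_{L²(ℝ^d)}, where Ω_I := {ξ ∈ ℝ^d : |‖ξ⁻‖ − kt| > kt/2}. -/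
open MeasureTheory
open scoped ENNReal

/-- `‖ξ⁻‖`, the Euclidean norm of the first `d − 1` coordinates of `ξ ∈ ℝ^d`. -/
noncomputable def xiMinusNorm {d : ℕ} (ξ : EuclideanSpace ℝ (Fin d)) : ℝ :=
  Real.sqrt (∑ i ∈ Finset.univ.filter (fun i : Fin d => (i : ℕ) < d - 1), ξ i ^ 2)

/-- `ξ_d`, the last coordinate of `ξ ∈ ℝ^d`. -/
noncomputable def xiLast {d : ℕ} (hd : 0 < d) (ξ : EuclideanSpace ℝ (Fin d)) : ℝ :=
  ξ ⟨d - 1, Nat.sub_lt hd one_pos⟩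

/-- The symbol denominator `den_{k,t}(ξ) = (‖ξ⁻‖² − k²t² + ξ_d²) + 2ik√(t²+1)ξ_d`. -/
noncomputable def denom (k t : ℝ) {d : ℕ} (hd : 0 < d) (ξ : EuclideanSpace ℝ (Fin d)) : ℂ :=
  ((xiMinusNorm ξ ^ 2 - k ^ 2 * t ^ 2 + xiLast hd ξ ^ 2 : ℝ) : ℂ)
    + 2 * Complex.I * (k : ℂ) * (Real.sqrt (t ^ 2 + 1) : ℂ) * (xiLast hd ξ : ℂ)

lemma norm_sq_split {d : ℕ} (hd0 : 0 < d) (ξ : EuclideanSpace ℝ (Fin d)) :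
    ‖ξ‖ ^ 2 = xiMinusNorm ξ ^ 2 + xiLast hd0 ξ ^ 2 := by
  have h1 : ‖ξ‖ ^ 2 = ∑ i, ξ i ^ 2 := by
    rw [EuclideanSpace.norm_eq, Real.sq_sqrt (Finset.sum_nonneg fun i _ => sq_nonneg _)]
    simp [sq_abs]
  have h2 : xiMinusNorm ξ ^ 2
      = ∑ i ∈ Finset.univ.filter (fun i : Fin d => (i : ℕ) < d - 1), ξ i ^ 2 :=
    Real.sq_sqrt (Finset.sum_nonneg fun i _ => sq_nonneg _)
  have h3 : Finset.univ.filter (fun i : Fin d => ¬ (i : ℕ) < d - 1)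
      = {(⟨d - 1, Nat.sub_lt hd0 one_pos⟩ : Fin d)} := by
    ext i
    simp only [Finset.mem_filter, Finset.mem_univ, true_and, Finset.mem_singleton,
      Fin.ext_iff]
    have := i.isLt
    omega
  rw [h1, h2, xiLast,
    ← Finset.sum_filter_add_sum_filter_not Finset.univ (fun i : Fin d => (i : ℕ) < d - 1)
      (fun i => ξ i ^ 2), h3, Finset.sum_singleton]

set_option maxHeartbeats 1000000 in
lemma key_pointwise {d : ℕ} (hd0 : 0 < d) {s k t : ℝ} (hs : 0 ≤ s) (hs' : s ≤ 1)
    (hk : 0 < k) (ht : 0 < t) (hkt : 1 ≤ k * t) (ξ : EuclideanSpace ℝ (Fin d))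
    (hξ : k * t / 2 < |xiMinusNorm ξ - k * t|) :
    k ^ 2 * (1 + ‖ξ‖ ^ 2) ^ s / ‖denom k t hd0 ξ‖
      ≤ 7 * k ^ (2 * s) * t ^ (2 * s - 2) := by
  set r := xiMinusNorm ξ with hr
  set a := xiLast hd0 ξ with ha
  set D := ‖denom k t hd0 ξ‖ with hD
  set K := k ^ 2 * t ^ 2 with hKdef
  have hr0 : 0 ≤ r := Real.sqrt_nonneg _
  have hK1 : 1 ≤ K := by nlinarith
  have hre : (denom k t hd0 ξ).re = r ^ 2 - K + a ^ 2 := by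
    simp [denom, hr, ha, hKdef, ← Complex.ofReal_pow]
  have him : (denom k t hd0 ξ).im = 2 * k * Real.sqrt (t ^ 2 + 1) * a := by
    simp [denom, hr, ha, ← Complex.ofReal_pow]
  have hsq : D ^ 2 = (r ^ 2 - K + a ^ 2) ^ 2 + (2 * k * Real.sqrt (t ^ 2 + 1) * a) ^ 2 := by
    rw [hD, Complex.sq_norm, Complex.normSq_apply, hre, him]; ring
  have hst : Real.sqrt (t ^ 2 + 1) ^ 2 = t ^ 2 + 1 :=
    Real.sq_sqrt (by positivity)
  have hD0 : 0 ≤ D := norm_nonneg _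
  have habsre : |r ^ 2 - K + a ^ 2| ≤ D := by
    rw [← hre]; exact (Complex.abs_re_le_norm _)
  have him2 : (2 * k * Real.sqrt (t ^ 2 + 1) * a) ^ 2 = 4 * k ^ 2 * (t ^ 2 + 1) * a ^ 2 := by
    nlinarith [hst]
  have hDim : D ^ 2 ≥ 4 * K * a ^ 2 := by
    nlinarith [sq_nonneg (r ^ 2 - K + a ^ 2), sq_nonneg (k * a)]
  -- the region condition
  have hcase : r ^ 2 < K / 4 ∨ 9 * K / 4 < r ^ 2 := by
    rcases lt_abs.mp hξ with h | h
    · right; nlinarith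
    · left; nlinarith
  have hre1 : r ^ 2 - K + a ^ 2 ≤ D := (abs_le.mp habsre).2
  have hre2 : -(r ^ 2 - K + a ^ 2) ≤ D := neg_le.mpr (abs_le.mp habsre).1
  have hmain : K ≤ 7 * D ∧ 1 + r ^ 2 + a ^ 2 ≤ 7 * D := by
    rcases hcase with h | h
    · rcases le_or_gt (a ^ 2) (K / 2) with h2 | h2
      · constructor <;> nlinarith
      · rcases le_or_gt (a ^ 2) (2 * K) with h3 | h3
        · have hDK : K ≤ D := by nlinarith
          constructor <;> nlinarith
        · constructor <;> nlinarith
    · constructor <;> nlinarith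
  obtain ⟨hm1, hm2⟩ := hmain
  have hN : 1 + ‖ξ‖ ^ 2 = 1 + r ^ 2 + a ^ 2 := by rw [norm_sq_split hd0 ξ]; ring
  have hDpos : 0 < D := by nlinarith
  have hK0 : 0 < K := by linarith
  have hN0 : (0:ℝ) < 1 + r ^ 2 + a ^ 2 := by positivity
  -- interpolation: K^(1-s) * (1+N)^s ≤ 7 D
  have hinterp : K ^ (1 - s) * (1 + r ^ 2 + a ^ 2) ^ s ≤ 7 * D := by
    have h1 : K ^ (1 - s) ≤ (7 * D) ^ (1 - s) :=
      Real.rpow_le_rpow hK0.le hm1 (by linarith)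
    have h2 : (1 + r ^ 2 + a ^ 2) ^ s ≤ (7 * D) ^ s :=
      Real.rpow_le_rpow hN0.le hm2 hs
    have h3 : (7 * D) ^ (1 - s) * (7 * D) ^ s = 7 * D := by
      rw [← Real.rpow_add (by positivity)]
      norm_num
    calc K ^ (1 - s) * (1 + r ^ 2 + a ^ 2) ^ s
        ≤ (7 * D) ^ (1 - s) * (7 * D) ^ s := by
          apply mul_le_mul h1 h2 (Real.rpow_nonneg hN0.le s) (Real.rpow_nonneg (by positivity) _)
      _ = 7 * D := h3
  have hexp : k ^ (2 * s) * t ^ (2 * s - 2) * K ^ (1 - s) = k ^ 2 := by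
    rw [hKdef, Real.mul_rpow (sq_nonneg k) (sq_nonneg t),
      ← Real.rpow_natCast k 2, ← Real.rpow_natCast t 2,
      ← Real.rpow_mul hk.le, ← Real.rpow_mul ht.le]
    rw [show (k ^ (2*s) * t ^ (2*s-2)) * (k ^ ((2:ℕ) * (1 - s)) * t ^ ((2:ℕ) * (1 - s)))
        = (k ^ (2*s) * k ^ ((2:ℕ) * (1 - s))) * (t ^ (2*s-2) * t ^ ((2:ℕ) * (1 - s))) by ring,
      ← Real.rpow_add hk, ← Real.rpow_add ht]
    norm_num
    rw [show (2*s + 2*(1 - s)) = (2:ℝ) by ring, show (2*s - 2 + 2*(1 - s)) = (0:ℝ) by ring,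
      Real.rpow_zero, Real.rpow_two, mul_one]
  rw [div_le_iff₀ hDpos, hN]
  calc k ^ 2 * (1 + r ^ 2 + a ^ 2) ^ s
      = k ^ (2 * s) * t ^ (2 * s - 2) * (K ^ (1 - s) * (1 + r ^ 2 + a ^ 2) ^ s) := by
        rw [← mul_assoc, hexp]
    _ ≤ k ^ (2 * s) * t ^ (2 * s - 2) * (7 * D) := by
        apply mul_le_mul_of_nonneg_left hinterp
        positivity
    _ = 7 * k ^ (2 * s) * t ^ (2 * s - 2) * D := by ring

/-- Estimate of the term `I`: the integral over the region
`Ω_I = {ξ : |‖ξ⁻‖ − kt| > kt/2}` away from the characteristic sphere. -/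
theorem stmt_3 (d : ℕ) (hd : d = 2 ∨ d = 3) (s : ℝ) (hs : 0 ≤ s) (hs' : s ≤ 1 / 2) :
    ∃ C > (0 : ℝ), ∀ k t : ℝ, 0 < k → 0 < t → 1 ≤ k * t →
      ∀ F G : EuclideanSpace ℝ (Fin d) → ℝ, Measurable F → Measurable G →
        (∀ ξ, 0 ≤ F ξ) → (∀ ξ, 0 ≤ G ξ) →
        (∫⁻ ξ in {ξ | k * t / 2 < |xiMinusNorm ξ - k * t|},
            ENNReal.ofReal (k ^ 2 * (1 + ‖ξ‖ ^ 2) ^ s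
              / ‖denom k t (by omega) ξ‖ * F ξ * G ξ)) ≤
          ENNReal.ofReal (C * k ^ (2 * s) * t ^ (2 * s - 2))
            * (∫⁻ ξ, ENNReal.ofReal (F ξ ^ 2)) ^ (1 / 2 : ℝ)
            * (∫⁻ ξ, ENNReal.ofReal (G ξ ^ 2)) ^ (1 / 2 : ℝ) := by
  have hd0 : 0 < d := by omega
  refine ⟨7, by norm_num, ?_⟩
  intro k t hk ht hkt F G hF hG hF0 hG0
  set C' : ℝ := 7 * k ^ (2 * s) * t ^ (2 * s - 2) with hC'
  have hC'0 : 0 ≤ C' := by positivity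
  set S : Set (EuclideanSpace ℝ (Fin d)) :=
    {ξ | k * t / 2 < |xiMinusNorm ξ - k * t|} with hS
  have hcont : Continuous (fun ξ : EuclideanSpace ℝ (Fin d) => xiMinusNorm ξ) := by
    unfold xiMinusNorm
    exact Real.continuous_sqrt.comp
      (continuous_finset_sum _ fun i _ => (EuclideanSpace.proj (𝕜 := ℝ) i).continuous.pow 2)
  have hSmeas : MeasurableSet S :=
    measurableSet_lt measurable_const ((hcont.sub continuous_const).abs.measurable)
  have hbound : ∀ ξ ∈ S,
      ENNReal.ofReal (k ^ 2 * (1 + ‖ξ‖ ^ 2) ^ s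
          / ‖denom k t hd0 ξ‖ * F ξ * G ξ)
        ≤ ENNReal.ofReal C' * (ENNReal.ofReal (F ξ) * ENNReal.ofReal (G ξ)) := by
    intro ξ hξ
    have hkey := key_pointwise hd0 hs (by linarith : s ≤ 1) hk ht hkt ξ hξ
    calc ENNReal.ofReal (k ^ 2 * (1 + ‖ξ‖ ^ 2) ^ s
          / ‖denom k t hd0 ξ‖ * F ξ * G ξ)
        ≤ ENNReal.ofReal (C' * F ξ * G ξ) := by
          apply ENNReal.ofReal_le_ofReal
          apply mul_le_mul_of_nonneg_right _ (hG0 ξ)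
          exact mul_le_mul_of_nonneg_right hkey (hF0 ξ)
      _ = ENNReal.ofReal C' * (ENNReal.ofReal (F ξ) * ENNReal.ofReal (G ξ)) := by
          rw [ENNReal.ofReal_mul (mul_nonneg hC'0 (hF0 ξ)), ENNReal.ofReal_mul hC'0, mul_assoc]
  have hhold : (∫⁻ ξ, ENNReal.ofReal (F ξ) * ENNReal.ofReal (G ξ))
      ≤ (∫⁻ ξ, ENNReal.ofReal (F ξ ^ 2)) ^ (1 / 2 : ℝ)
        * (∫⁻ ξ, ENNReal.ofReal (G ξ ^ 2)) ^ (1 / 2 : ℝ) := by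
    have h := ENNReal.lintegral_mul_le_Lp_mul_Lq (volume)
      (p := 2) (q := 2) Real.HolderConjugate.two_two
      (f := fun ξ => ENNReal.ofReal (F ξ)) (g := fun ξ => ENNReal.ofReal (G ξ))
      (ENNReal.measurable_ofReal.comp hF).aemeasurable
      (ENNReal.measurable_ofReal.comp hG).aemeasurable
    have e1 : ∀ (H : EuclideanSpace ℝ (Fin d) → ℝ), (∀ ξ, 0 ≤ H ξ) →
        (∫⁻ ξ, (ENNReal.ofReal (H ξ)) ^ (2 : ℕ)) = ∫⁻ ξ, ENNReal.ofReal (H ξ ^ 2) := by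
      intro H h0
      refine lintegral_congr fun ξ => ?_
      rw [ENNReal.ofReal_pow (h0 ξ)]
    simpa [Pi.mul_apply, e1 F hF0, e1 G hG0] using h
  calc (∫⁻ ξ in S, ENNReal.ofReal (k ^ 2 * (1 + ‖ξ‖ ^ 2) ^ s
          / ‖denom k t hd0 ξ‖ * F ξ * G ξ))
      ≤ ∫⁻ ξ in S, ENNReal.ofReal C' * (ENNReal.ofReal (F ξ) * ENNReal.ofReal (G ξ)) :=
        lintegral_mono_ae ((ae_restrict_iff' hSmeas).2 (Filter.Eventually.of_forall hbound))
    _ ≤ ∫⁻ ξ, ENNReal.ofReal C' * (ENNReal.ofReal (F ξ) * ENNReal.ofReal (G ξ)) :=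
        setLIntegral_le_lintegral _ _
    _ = ENNReal.ofReal C' * ∫⁻ ξ, ENNReal.ofReal (F ξ) * ENNReal.ofReal (G ξ) :=
        lintegral_const_mul' _ _ ENNReal.ofReal_ne_top
    _ ≤ ENNReal.ofReal C' * ((∫⁻ ξ, ENNReal.ofReal (F ξ ^ 2)) ^ (1 / 2 : ℝ)
          * (∫⁻ ξ, ENNReal.ofReal (G ξ ^ 2)) ^ (1 / 2 : ℝ)) :=
        mul_le_mul_right hhold _
    _ = ENNReal.ofReal (7 * k ^ (2 * s) * t ^ (2 * s - 2))
          * (∫⁻ ξ, ENNReal.ofReal (F ξ ^ 2)) ^ (1 / 2 : ℝ)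
          * (∫⁻ ξ, ENNReal.ofReal (G ξ ^ 2)) ^ (1 / 2 : ℝ) := by
        rw [mul_assoc]
end

section
/- There exists an absolute constant C > 0 such that for all k, t > 0, all a ∈ (kt, 3kt/2), all real c with c² < k²t²/4, and a' := 2kt − a, one has |k²/((a² − k²t² + c²) + 2ik√(t²+1)c) + k²/((a'² − k²t² + c²) − 2ik√(t²+1)c)| ≤ C/t². -/
set_option maxHeartbeats 800000


/-- Pointwise bound `|m_t(ξ) + m_t(ξ*)| ≲ 1/t²` on the region
`Ω₂ = {ξ : kt < ‖ξ⁻‖ < 3kt/2, |ξ_d| < kt/2}` in the two-dimensional case,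
with `a = ‖ξ⁻‖`, `a' = 2kt − a` and `c = ξ_d`. -/
theorem stmt_12 :
    ∃ C > (0 : ℝ), ∀ k t : ℝ, 0 < k → 0 < t →
      ∀ a : ℝ, k * t < a → a < 3 * k * t / 2 →
        ∀ c : ℝ, c ^ 2 < k ^ 2 * t ^ 2 / 4 →
          ‖(k : ℂ) ^ 2 / (((a ^ 2 - k ^ 2 * t ^ 2 + c ^ 2 : ℝ) : ℂ)
                + 2 * Complex.I * (k : ℂ) * (Real.sqrt (t ^ 2 + 1) : ℂ) * (c : ℂ))
              + (k : ℂ) ^ 2 / ((((2 * k * t - a) ^ 2 - k ^ 2 * t ^ 2 + c ^ 2 : ℝ) : ℂ)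
                - 2 * Complex.I * (k : ℂ) * (Real.sqrt (t ^ 2 + 1) : ℂ) * (c : ℂ))‖ ≤
            C / t ^ 2 := by
  refine ⟨4/3, by norm_num, ?_⟩
  intro k t hk ht a ha1 ha2 c hc
  have hu0 : 0 < a - k * t := by linarith
  have hkt : 0 < k * t := mul_pos hk ht
  -- abbreviations
  set A : ℝ := a ^ 2 - k ^ 2 * t ^ 2 + c ^ 2 with hA
  set A' : ℝ := (2 * k * t - a) ^ 2 - k ^ 2 * t ^ 2 + c ^ 2 with hA'
  set B : ℝ := 2 * k * Real.sqrt (t ^ 2 + 1) * c with hB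
  have hsq : Real.sqrt (t ^ 2 + 1) ^ 2 = t ^ 2 + 1 := Real.sq_sqrt (by positivity)
  have hB2 : B ^ 2 = 4 * k ^ 2 * (t ^ 2 + 1) * c ^ 2 := by
    have h : B ^ 2 = 4 * k ^ 2 * Real.sqrt (t ^ 2 + 1) ^ 2 * c ^ 2 := by rw [hB]; ring
    rw [h, hsq]
  have hApos : 0 < A := by rw [hA]; nlinarith
  -- the two denominators as complex numbers
  set z₁ : ℂ := (A : ℂ) + (B : ℂ) * Complex.I with hz₁
  set z₂ : ℂ := (A' : ℂ) + (-B : ℂ) * Complex.I with hz₂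
  have hz₁ne : z₁ ≠ 0 := by
    intro h
    have := congrArg Complex.re h
    simp [hz₁] at this
    linarith
  -- lower bounds on the squared moduli
  have hAB : 4 * k ^ 2 * t ^ 2 * ((a - k * t) ^ 2 + c ^ 2) ≤ A ^ 2 + B ^ 2 := by
    have h1 : (4 * k ^ 2 * t ^ 2) * (a - k * t) ^ 2 ≤ A ^ 2 := by
      have : 2 * (k * t) * (a - k * t) ≤ A := by rw [hA]; nlinarith
      nlinarith [mul_pos hkt hu0]
    nlinarith [hB2, sq_nonneg (k * c), mul_pos hk ht]
  have hA'B : 9 / 16 * (k ^ 2 * t ^ 2) * ((a - k * t) ^ 2 + c ^ 2) ≤ A' ^ 2 + B ^ 2 := by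
    have hB2' : 4 * k ^ 2 * t ^ 2 * c ^ 2 ≤ B ^ 2 := by
      rw [hB2]; nlinarith [sq_nonneg (k * c)]
    have hA'eq : A' = c ^ 2 - (a - k * t) * (3 * k * t - a) := by rw [hA']; ring
    have hs : 3 / 2 * (k * t) < 3 * k * t - a := by linarith
    have hspos : (0:ℝ) < 3 * k * t - a := by linarith
    have hc916 : 9 / 16 * (k ^ 2 * t ^ 2) * c ^ 2 ≤ B ^ 2 := by
      nlinarith [sq_nonneg (k * t * c)]
    rcases le_or_gt (c ^ 2) ((a - k * t) * (3 * k * t - a) / 2) with hcase | hcase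
    · -- A' ≤ -(a-kt)(3kt-a)/2 , so A'^2 is large
      have hneg : A' ≤ -((a - k * t) * (3 * k * t - a) / 2) := by rw [hA'eq]; linarith
      have hnn : 0 ≤ (a - k * t) * (3 * k * t - a) / 2 :=
        by positivity
      have hA'2 : ((a - k * t) * (3 * k * t - a) / 2) ^ 2 ≤ A' ^ 2 := by nlinarith
      have hs2 : 9 / 4 * (k ^ 2 * t ^ 2) ≤ (3 * k * t - a) ^ 2 := by nlinarith
      have h1 : 9 / 16 * (k ^ 2 * t ^ 2) * (a - k * t) ^ 2
          ≤ ((a - k * t) * (3 * k * t - a) / 2) ^ 2 := by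
        nlinarith [mul_le_mul_of_nonneg_left hs2 (sq_nonneg (a - k * t))]
      linarith
    · -- c² is large, B² dominates
      have h3u : a - k * t < k * t / 2 := by linarith
      have h2 : 3 * (a - k * t) ^ 2 ≤ (a - k * t) * (3 * k * t - a) := by
        nlinarith [mul_pos hu0 (show (0:ℝ) < (3 * k * t - a) - 3 * (a - k * t) by linarith)]
      have hu2c : 3 * (a - k * t) ^ 2 ≤ 2 * c ^ 2 := by linarith
      have h4 : 9 / 16 * (k ^ 2 * t ^ 2) * (a - k * t) ^ 2
          ≤ 3 / 8 * (k ^ 2 * t ^ 2) * c ^ 2 := by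
        nlinarith [mul_le_mul_of_nonneg_left hu2c (show (0:ℝ) ≤ k ^ 2 * t ^ 2 by positivity)]
      nlinarith [sq_nonneg A', sq_nonneg (k * t * c)]
  have hz₂ne : z₂ ≠ 0 := by
    intro h
    have hre := congrArg Complex.re h
    have him := congrArg Complex.im h
    simp [hz₂] at hre him
    have hpos : 0 < 9 / 16 * (k ^ 2 * t ^ 2) * ((a - k * t) ^ 2 + c ^ 2) := by positivity
    rw [hre, him] at hA'B
    norm_num at hA'B
    linarith
  -- rewrite the sum
  have key : (k : ℂ) ^ 2 / (((a ^ 2 - k ^ 2 * t ^ 2 + c ^ 2 : ℝ) : ℂ)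
                + 2 * Complex.I * (k : ℂ) * (Real.sqrt (t ^ 2 + 1) : ℂ) * (c : ℂ))
              + (k : ℂ) ^ 2 / ((((2 * k * t - a) ^ 2 - k ^ 2 * t ^ 2 + c ^ 2 : ℝ) : ℂ)
                - 2 * Complex.I * (k : ℂ) * (Real.sqrt (t ^ 2 + 1) : ℂ) * (c : ℂ))
      = ((k ^ 2 * (A + A') : ℝ) : ℂ) / (z₁ * z₂) := by
    have e1 : ((a ^ 2 - k ^ 2 * t ^ 2 + c ^ 2 : ℝ) : ℂ)
        + 2 * Complex.I * (k : ℂ) * (Real.sqrt (t ^ 2 + 1) : ℂ) * (c : ℂ) = z₁ := by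
      rw [hz₁, hA, hB]; push_cast; ring
    have e2 : (((2 * k * t - a) ^ 2 - k ^ 2 * t ^ 2 + c ^ 2 : ℝ) : ℂ)
        - 2 * Complex.I * (k : ℂ) * (Real.sqrt (t ^ 2 + 1) : ℂ) * (c : ℂ) = z₂ := by
      rw [hz₂, hA', hB]; push_cast; ring
    rw [e1, e2, div_add_div _ _ hz₁ne hz₂ne]
    congr 1
    rw [hz₁, hz₂]; push_cast; ring
  rw [key]
  have habs₁ : ‖z₁‖ = Real.sqrt (A ^ 2 + B ^ 2) := by
    rw [hz₁, Complex.norm_add_mul_I]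
  have habs₂ : ‖z₂‖ = Real.sqrt (A' ^ 2 + B ^ 2) := by
    have h : z₂ = ((A' : ℝ) : ℂ) + ((-B : ℝ) : ℂ) * Complex.I := by
      rw [hz₂]; push_cast; ring
    rw [h, Complex.norm_add_mul_I]
    congr 1; ring
  have hAA' : A + A' = 2 * ((a - k * t) ^ 2 + c ^ 2) := by rw [hA, hA']; ring
  have hABnn : (0:ℝ) ≤ A ^ 2 + B ^ 2 := by positivity
  have hden : 3 / 2 * (k ^ 2 * t ^ 2) * ((a - k * t) ^ 2 + c ^ 2)
      ≤ Real.sqrt (A ^ 2 + B ^ 2) * Real.sqrt (A' ^ 2 + B ^ 2) := by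
    rw [← Real.sqrt_mul hABnn]
    have hpos : 0 < 3 / 2 * (k ^ 2 * t ^ 2) * ((a - k * t) ^ 2 + c ^ 2) := by positivity
    rw [show (3 / 2 * (k ^ 2 * t ^ 2) * ((a - k * t) ^ 2 + c ^ 2)) =
        Real.sqrt ((3 / 2 * (k ^ 2 * t ^ 2) * ((a - k * t) ^ 2 + c ^ 2)) ^ 2) from
      (Real.sqrt_sq hpos.le).symm]
    apply Real.sqrt_le_sqrt
    calc (3 / 2 * (k ^ 2 * t ^ 2) * ((a - k * t) ^ 2 + c ^ 2)) ^ 2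
        = (4 * k ^ 2 * t ^ 2 * ((a - k * t) ^ 2 + c ^ 2)) *
          (9 / 16 * (k ^ 2 * t ^ 2) * ((a - k * t) ^ 2 + c ^ 2)) := by ring
      _ ≤ (A ^ 2 + B ^ 2) * (A' ^ 2 + B ^ 2) := by
          apply mul_le_mul hAB hA'B (by positivity) hABnn
  rw [norm_div, norm_mul, habs₁, habs₂, Complex.norm_real, Real.norm_eq_abs,
    abs_of_nonneg (by rw [hAA']; positivity)]
  have hdenpos : 0 < 3 / 2 * (k ^ 2 * t ^ 2) * ((a - k * t) ^ 2 + c ^ 2) := by positivity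
  calc k ^ 2 * (A + A') / (Real.sqrt (A ^ 2 + B ^ 2) * Real.sqrt (A' ^ 2 + B ^ 2))
      ≤ k ^ 2 * (A + A') / (3 / 2 * (k ^ 2 * t ^ 2) * ((a - k * t) ^ 2 + c ^ 2)) := by
        apply div_le_div_of_nonneg_left _ hdenpos hden
        rw [hAA']; positivity
    _ = 4 / 3 / t ^ 2 := by
        rw [hAA']
        field_simp
        ring
end

section
/- There exists an absolute constant C > 0 such that for all k, t > 0, all a ∈ (kt, 3kt/2), all real c with c² < k²t²/4, and a' := 2kt − a, one has |k²/((a² − k²t² + c²) + 2ik√(t²+1)c) + (2kt/a − 1) · k²/((a'² − k²t² + c²) − 2ik√(t²+1)c)| ≤ C/t². -/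
set_option maxHeartbeats 1000000 in
lemma key_aux_stmt13 (a k t c b : ℝ) (ha0 : (a:ℂ) ≠ 0)
    (hD₁0 : ((a ^ 2 - k ^ 2 * t ^ 2 + c ^ 2 : ℝ) : ℂ)
      + 2 * Complex.I * (k : ℂ) * (b : ℂ) * (c : ℂ) ≠ 0)
    (hD₂0 : (((2 * k * t - a) ^ 2 - k ^ 2 * t ^ 2 + c ^ 2 : ℝ) : ℂ)
      - 2 * Complex.I * (k : ℂ) * (b : ℂ) * (c : ℂ) ≠ 0) :
    (k : ℂ) ^ 2 / (((a ^ 2 - k ^ 2 * t ^ 2 + c ^ 2 : ℝ) : ℂ)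
      + 2 * Complex.I * (k : ℂ) * (b : ℂ) * (c : ℂ))
    + ((2 * k * t / a - 1 : ℝ) : ℂ)
      * ((k : ℂ) ^ 2 / ((((2 * k * t - a) ^ 2 - k ^ 2 * t ^ 2 + c ^ 2 : ℝ) : ℂ)
        - 2 * Complex.I * (k : ℂ) * (b : ℂ) * (c : ℂ)))
    = ((2 * k ^ 2 * ((a - k * t) ^ 2 + c ^ 2) : ℝ) : ℂ)
        / ((((a ^ 2 - k ^ 2 * t ^ 2 + c ^ 2 : ℝ) : ℂ)
            + 2 * Complex.I * (k : ℂ) * (b : ℂ) * (c : ℂ))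
          * ((((2 * k * t - a) ^ 2 - k ^ 2 * t ^ 2 + c ^ 2 : ℝ) : ℂ)
            - 2 * Complex.I * (k : ℂ) * (b : ℂ) * (c : ℂ)))
      - ((2 * (a - k * t) * k ^ 2 / a : ℝ) : ℂ)
        / ((((2 * k * t - a) ^ 2 - k ^ 2 * t ^ 2 + c ^ 2 : ℝ) : ℂ)
          - 2 * Complex.I * (k : ℂ) * (b : ℂ) * (c : ℂ)) := by
  push_cast at hD₁0 hD₂0 ⊢
  have hq : (2 * ↑k * ↑t / ↑a - 1 : ℂ) = (2 * k * t - a) / a := by field_simp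
  rw [hq, div_div, div_mul_div_comm, div_add_div _ _ hD₁0 (mul_ne_zero ha0 hD₂0),
    div_sub_div _ _ (mul_ne_zero hD₁0 hD₂0) (mul_ne_zero ha0 hD₂0),
    div_eq_div_iff (mul_ne_zero hD₁0 (mul_ne_zero ha0 hD₂0)) (mul_ne_zero (mul_ne_zero hD₁0 hD₂0) (mul_ne_zero ha0 hD₂0))]
  ring

set_option maxHeartbeats 1000000 in
/-- Pointwise bound `|m_t(ξ) + m_t(ξ*)J_t(ξ)| ≲ 1/t²` on the region
`Ω₂ = {ξ : kt < ‖ξ⁻‖ < 3kt/2, |ξ_d| < kt/2}` in the three-dimensional case,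
with `a = ‖ξ⁻‖`, `a' = 2kt − a`, `c = ξ_d` and Jacobian factor `J_t(ξ) = 2kt/a − 1`. -/
theorem stmt_13 :
    ∃ C > (0 : ℝ), ∀ k t : ℝ, 0 < k → 0 < t →
      ∀ a : ℝ, k * t < a → a < 3 * k * t / 2 →
        ∀ c : ℝ, c ^ 2 < k ^ 2 * t ^ 2 / 4 →
          ‖(k : ℂ) ^ 2 / (((a ^ 2 - k ^ 2 * t ^ 2 + c ^ 2 : ℝ) : ℂ)
                + 2 * Complex.I * (k : ℂ) * (Real.sqrt (t ^ 2 + 1) : ℂ) * (c : ℂ))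
              + ((2 * k * t / a - 1 : ℝ) : ℂ)
                * ((k : ℂ) ^ 2 / ((((2 * k * t - a) ^ 2 - k ^ 2 * t ^ 2 + c ^ 2 : ℝ) : ℂ)
                  - 2 * Complex.I * (k : ℂ) * (Real.sqrt (t ^ 2 + 1) : ℂ) * (c : ℂ)))‖ ≤
            C / t ^ 2 := by
  refine ⟨8, by norm_num, ?_⟩
  intro k t hk ht a ha1 ha2 c hc
  set b := Real.sqrt (t ^ 2 + 1) with hbdef
  have hb : t ≤ b := by
    rw [hbdef]
    nlinarith [Real.sq_sqrt (by positivity : (0:ℝ) ≤ t^2+1),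
      Real.sqrt_nonneg (t^2+1), sq_nonneg (Real.sqrt (t^2+1) - t)]
  have hbpos : 0 < b := lt_of_lt_of_le ht hb
  have hδ : 0 < a - k * t := by linarith
  have hδ2 : 2 * (a - k * t) < k * t := by linarith
  have hkt : 0 < k * t := by positivity
  have hapos : 0 < a := lt_trans hkt ha1
  have hcabs : |c| < k * t / 2 := by
    rw [abs_lt]; constructor <;> nlinarith [sq_abs c, abs_nonneg c]
  set D₁ : ℂ := ((a ^ 2 - k ^ 2 * t ^ 2 + c ^ 2 : ℝ) : ℂ)
      + 2 * Complex.I * (k : ℂ) * (b : ℂ) * (c : ℂ) with hD₁def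
  set D₂ : ℂ := (((2 * k * t - a) ^ 2 - k ^ 2 * t ^ 2 + c ^ 2 : ℝ) : ℂ)
      - 2 * Complex.I * (k : ℂ) * (b : ℂ) * (c : ℂ) with hD₂def
  have h1re : D₁.re = a ^ 2 - k ^ 2 * t ^ 2 + c ^ 2 := by
    rw [hD₁def]
    simp only [pow_two, Complex.add_re, Complex.mul_re, Complex.mul_im,
      Complex.I_re, Complex.I_im, Complex.ofReal_re, Complex.ofReal_im,
      Complex.re_ofNat, Complex.im_ofNat]
    ring
  have h1im : D₁.im = 2 * k * b * c := by
    rw [hD₁def]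
    simp only [pow_two, Complex.add_im, Complex.mul_re, Complex.mul_im,
      Complex.I_re, Complex.I_im, Complex.ofReal_re, Complex.ofReal_im,
      Complex.re_ofNat, Complex.im_ofNat]
    ring
  have h2re : D₂.re = (2 * k * t - a) ^ 2 - k ^ 2 * t ^ 2 + c ^ 2 := by
    rw [hD₂def]
    simp only [pow_two, Complex.sub_re, Complex.mul_re, Complex.mul_im,
      Complex.I_re, Complex.I_im, Complex.ofReal_re, Complex.ofReal_im,
      Complex.re_ofNat, Complex.im_ofNat]
    ring
  have h2im : D₂.im = -(2 * k * b * c) := by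
    rw [hD₂def]
    simp only [pow_two, Complex.sub_im, Complex.mul_re, Complex.mul_im,
      Complex.I_re, Complex.I_im, Complex.ofReal_re, Complex.ofReal_im,
      Complex.re_ofNat, Complex.im_ofNat]
    ring
  have habs1a : 2 * k * t * (a - k * t) ≤ ‖D₁‖ := by
    have hle := Complex.abs_re_le_norm D₁
    rw [h1re] at hle
    have h2 : 2 * k * t * (a - k * t) ≤ a ^ 2 - k ^ 2 * t ^ 2 + c ^ 2 := by
      nlinarith [sq_nonneg c]
    exact le_trans (le_trans h2 (le_abs_self _)) hle
  have habs1b : 2 * k * t * |c| ≤ ‖D₁‖ := by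
    have hle := Complex.abs_im_le_norm D₁
    rw [h1im] at hle
    have h2 : 2 * k * t * |c| ≤ |2 * k * b * c| := by
      rw [abs_mul, abs_of_nonneg (by positivity : (0:ℝ) ≤ 2 * k * b)]
      nlinarith [mul_nonneg (mul_nonneg hk.le (sub_nonneg.mpr hb)) (abs_nonneg c)]
    exact le_trans h2 hle
  have habs2b : 2 * k * t * |c| ≤ ‖D₂‖ := by
    have hle := Complex.abs_im_le_norm D₂
    rw [h2im, abs_neg] at hle
    have h2 : 2 * k * t * |c| ≤ |2 * k * b * c| := by
      rw [abs_mul, abs_of_nonneg (by positivity : (0:ℝ) ≤ 2 * k * b)]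
      nlinarith [mul_nonneg (mul_nonneg hk.le (sub_nonneg.mpr hb)) (abs_nonneg c)]
    exact le_trans h2 hle
  have habs2a : 3 / 4 * (k * t) * (a - k * t) ≤ ‖D₂‖ := by
    rcases le_or_gt (c ^ 2) ((a - k * t) * (3 * k * t - a) / 2) with h | h
    · have hle := Complex.abs_re_le_norm D₂
      rw [h2re] at hle
      have hre : (2 * k * t - a) ^ 2 - k ^ 2 * t ^ 2 + c ^ 2
          ≤ -(3 / 4 * (k * t) * (a - k * t)) := by nlinarith
      exact le_trans (le_abs.mpr (Or.inr (by linarith))) hle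
    · have hcd : a - k * t ≤ |c| := by
        nlinarith [sq_abs c, abs_nonneg c]
      calc 3 / 4 * (k * t) * (a - k * t) ≤ 2 * k * t * |c| := by nlinarith
      _ ≤ _ := habs2b
  have hA1 : k * t * ((a - k * t) + |c|) ≤ ‖D₁‖ := by linarith
  have hA2 : 3 / 8 * (k * t) * ((a - k * t) + |c|) ≤ ‖D₂‖ := by
    linarith [norm_nonneg D₂]
  have hA1pos : 0 < ‖D₁‖ := lt_of_lt_of_le (by positivity) habs1a
  have hA2pos : 0 < ‖D₂‖ := lt_of_lt_of_le (by positivity) habs2a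
  have hD₁0 : D₁ ≠ 0 := by
    intro h; rw [h] at hA1pos; simp at hA1pos
  have hD₂0 : D₂ ≠ 0 := by
    intro h; rw [h] at hA2pos; simp at hA2pos
  have ha0 : (a : ℂ) ≠ 0 := by exact_mod_cast hapos.ne'
  rw [show (k : ℂ) ^ 2 / D₁ + ((2 * k * t / a - 1 : ℝ) : ℂ) * ((k : ℂ) ^ 2 / D₂)
      = ((2 * k ^ 2 * ((a - k * t) ^ 2 + c ^ 2) : ℝ) : ℂ) / (D₁ * D₂)
        - ((2 * (a - k * t) * k ^ 2 / a : ℝ) : ℂ) / D₂ from by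
    rw [hD₁def, hD₂def]; exact key_aux_stmt13 a k t c b ha0 (hD₁def ▸ hD₁0) (hD₂def ▸ hD₂0)]
  have habs : ‖((2 * k ^ 2 * ((a - k * t) ^ 2 + c ^ 2) : ℝ) : ℂ) / (D₁ * D₂)
        - ((2 * (a - k * t) * k ^ 2 / a : ℝ) : ℂ) / D₂‖
      ≤ (2 * k ^ 2 * ((a - k * t) ^ 2 + c ^ 2)) / (‖D₁‖ * ‖D₂‖)
        + (2 * (a - k * t) * k ^ 2 / a) / ‖D₂‖ := by
    refine le_trans (norm_sub_le _ _) ?_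
    rw [norm_div, norm_div, norm_mul, Complex.norm_real, Complex.norm_real, Real.norm_eq_abs, Real.norm_eq_abs,
      abs_of_nonneg (by positivity : (0:ℝ) ≤ 2 * k ^ 2 * ((a - k * t) ^ 2 + c ^ 2)),
      abs_of_nonneg (by positivity : (0:ℝ) ≤ 2 * (a - k * t) * k ^ 2 / a)]
  refine le_trans habs ?_
  have hterm1 : (2 * k ^ 2 * ((a - k * t) ^ 2 + c ^ 2)) / (‖D₁‖ * ‖D₂‖)
      ≤ (16 / 3) / t ^ 2 := by
    rw [div_le_div_iff₀ (by positivity) (by positivity)]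
    have hprod : (k * t * ((a - k * t) + |c|)) * (3 / 8 * (k * t) * ((a - k * t) + |c|))
        ≤ ‖D₁‖ * ‖D₂‖ :=
      mul_le_mul hA1 hA2 (by positivity) hA1pos.le
    nlinarith [sq_abs c, sq_nonneg (k * t),
      mul_nonneg (mul_nonneg (mul_nonneg hk.le hk.le) (mul_nonneg ht.le ht.le))
        (mul_nonneg hδ.le (abs_nonneg c))]
  have hterm2 : (2 * (a - k * t) * k ^ 2 / a) / ‖D₂‖ ≤ (8 / 3) / t ^ 2 := by
    have hN : 2 * (a - k * t) * k ^ 2 / a ≤ 2 * (a - k * t) * k / t := by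
      rw [div_le_div_iff₀ hapos ht]; nlinarith
    calc (2 * (a - k * t) * k ^ 2 / a) / ‖D₂‖
        ≤ (2 * (a - k * t) * k / t) / (3 / 4 * (k * t) * (a - k * t)) :=
          div_le_div₀ (by positivity) hN (by positivity) habs2a
    _ = (8 / 3) / t ^ 2 := by field_simp; ring
  calc (2 * k ^ 2 * ((a - k * t) ^ 2 + c ^ 2)) / (‖D₁‖ * ‖D₂‖)
        + (2 * (a - k * t) * k ^ 2 / a) / ‖D₂‖
      ≤ (16 / 3) / t ^ 2 + (8 / 3) / t ^ 2 := add_le_add hterm1 hterm2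
  _ = 8 / t ^ 2 := by ring
end

section
/- Let d ∈ {2,3} and s ∈ [0, 1/2]. There exists a constant C > 0, depending only on d and s, such that for all k, t > 0, all a ∈ (kt, 3kt/2), all real c with |c| < kt/2, and a' := 2kt − a, one has (2kt/a − 1)^{d−2} · |k²/((a'² − k²t² + c²) − 2ik√(t²+1)c)| · |(1 + a'² + c²)^s − (1 + a² + c²)^s| ≤ C k^{2s} t^{2s−2}. -/
set_option maxHeartbeats 1000000

lemma mvt_rpow {x y s : ℝ} (hy : 0 < y) (hxy : y ≤ x) (hs : 0 ≤ s) (hs1 : s ≤ 1) :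
    x ^ s - y ^ s ≤ s * y ^ (s - 1) * (x - y) := by
  have hx : 0 < x := hy.trans_le hxy
  have hu : (-1:ℝ) ≤ (x - y) / y := by
    have : (0:ℝ) ≤ (x - y) / y := div_nonneg (by linarith) hy.le
    linarith
  have hb := rpow_one_add_le_one_add_mul_self hu hs hs1
  have hxy' : 1 + (x - y) / y = x / y := by field_simp; ring
  rw [hxy', Real.div_rpow hx.le hy.le] at hb
  have hys : 0 < y ^ s := Real.rpow_pos_of_pos hy s
  have h2 : x ^ s ≤ y ^ s * (1 + s * ((x - y) / y)) := by
    have := mul_le_mul_of_nonneg_left hb hys.le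
    calc x ^ s = y ^ s * (x ^ s / y ^ s) := by field_simp
    _ ≤ y ^ s * (1 + s * ((x - y) / y)) := this
  have h3 : y ^ (s - 1) = y ^ s / y := Real.rpow_sub_one hy.ne' s
  rw [h3]
  have h4 : y ^ s * (1 + s * ((x - y) / y)) = y ^ s + s * (y ^ s / y) * (x - y) := by
    field_simp
  linarith [h2, h4.le]



/-- Pointwise mean-value-theorem bound
`|m_t(ξ*)J_t(ξ)((1+‖ξ*‖²)^s − (1+‖ξ‖²)^s)| ≲ k^{2s}/t^{2−2s}` used to estimate the
term `II₂₂`, with `a = ‖ξ⁻‖`, `a' = 2kt − a`, `c = ξ_d` and `J_t(ξ) = (2kt/a − 1)^{d−2}`. -/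
theorem stmt_14 (d : ℕ) (hd : d = 2 ∨ d = 3) (s : ℝ) (hs : 0 ≤ s) (hs' : s ≤ 1 / 2) :
    ∃ C > (0 : ℝ), ∀ k t : ℝ, 0 < k → 0 < t →
      ∀ a : ℝ, k * t < a → a < 3 * k * t / 2 →
        ∀ c : ℝ, |c| < k * t / 2 →
          (2 * k * t / a - 1) ^ (d - 2)
              * ‖((k : ℂ) ^ 2
                / ((((2 * k * t - a) ^ 2 - k ^ 2 * t ^ 2 + c ^ 2 : ℝ) : ℂ)
                  - 2 * Complex.I * (k : ℂ) * (Real.sqrt (t ^ 2 + 1) : ℂ) * (c : ℂ)))‖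
              * |(1 + (2 * k * t - a) ^ 2 + c ^ 2) ^ s - (1 + a ^ 2 + c ^ 2) ^ s| ≤
            C * k ^ (2 * s) * t ^ (2 * s - 2) := by
  refine ⟨32, by norm_num, ?_⟩
  intro k t hk ht a ha1 ha2 c hc
  have hkt : 0 < k * t := mul_pos hk ht
  have hδ : 0 < a - k * t := by linarith
  have hδ2 : a - k * t < k * t / 2 := by linarith
  have ha0 : 0 < a := by linarith
  have ha' : k * t / 2 < 2 * k * t - a := by linarith
  have ha'lt : 2 * k * t - a < a := by linarith
  -- J bound
  have hJ0 : 0 ≤ 2 * k * t / a - 1 := by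
    rw [sub_nonneg, le_div_iff₀ ha0]; linarith
  have hJ1 : 2 * k * t / a - 1 ≤ 1 := by
    rw [sub_le_iff_le_add, div_le_iff₀ ha0]; linarith
  have hJ : (2 * k * t / a - 1) ^ (d - 2) ≤ 1 := pow_le_one₀ hJ0 hJ1
  have hJnn : 0 ≤ (2 * k * t / a - 1) ^ (d - 2) := pow_nonneg hJ0 _
  -- z and its modulus lower bound
  set R : ℝ := (2 * k * t - a) ^ 2 - k ^ 2 * t ^ 2 + c ^ 2 with hR
  set S : ℝ := -(2 * k * Real.sqrt (t ^ 2 + 1) * c) with hS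
  have hzmk : (((2 * k * t - a) ^ 2 - k ^ 2 * t ^ 2 + c ^ 2 : ℝ) : ℂ)
      - 2 * Complex.I * (k : ℂ) * (Real.sqrt (t ^ 2 + 1) : ℂ) * (c : ℂ) = Complex.mk R S := by
    rw [Complex.mk_eq_add_mul_I]; push_cast [hR, hS]; ring
  have hsqrt : t ≤ Real.sqrt (t ^ 2 + 1) := by
    rw [show t ^ 2 + 1 = t^2 + 1 by ring]
    calc t = Real.sqrt (t ^ 2) := by rw [Real.sqrt_sq ht.le]
    _ ≤ Real.sqrt (t ^ 2 + 1) := Real.sqrt_le_sqrt (by linarith)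
  have hu32 : 3 / 2 * (k * t * (a - k * t)) ≤ (a - k * t) * (3 * k * t - a) := by nlinarith
  have hzlb : 3 / 4 * (k * t * (a - k * t)) ≤ ‖Complex.mk R S‖ := by
    by_cases hcc : c ^ 2 ≤ (a - k * t) * (3 * k * t - a) / 2
    · have h1 : |R| ≤ ‖Complex.mk R S‖ := by
        simpa using Complex.abs_re_le_norm (Complex.mk R S)
      have hRval : R = c ^ 2 - (a - k * t) * (3 * k * t - a) := by rw [hR]; ring
      have : 3 / 4 * (k * t * (a - k * t)) ≤ -R := by rw [hRval]; linarith
      calc 3 / 4 * (k * t * (a - k * t)) ≤ -R := this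
      _ ≤ |R| := neg_le_abs R
      _ ≤ _ := h1
    · push_neg at hcc
      have h1 : |S| ≤ ‖Complex.mk R S‖ := by
        simpa using Complex.abs_im_le_norm (Complex.mk R S)
      have hcd : a - k * t < |c| := by
        nlinarith [abs_nonneg c, sq_abs c]
      have hSval : |S| = 2 * k * Real.sqrt (t ^ 2 + 1) * |c| := by
        rw [hS, abs_neg, abs_mul, abs_of_nonneg (by positivity : (0:ℝ) ≤ 2 * k * Real.sqrt (t^2+1))]
      have : 3 / 4 * (k * t * (a - k * t)) ≤ |S| := by
        rw [hSval]
        have h2 : 2 * k * t * (a - k * t) ≤ 2 * k * t * |c| :=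
          mul_le_mul_of_nonneg_left hcd.le (by positivity)
        have h3 : 2 * k * t * |c| ≤ 2 * k * Real.sqrt (t ^ 2 + 1) * |c| :=
          mul_le_mul_of_nonneg_right (by nlinarith [hsqrt]) (abs_nonneg c)
        nlinarith [mul_pos hkt hδ]
      linarith [this, h1]
  have hzabspos : 0 < ‖Complex.mk R S‖ := lt_of_lt_of_le (by positivity) hzlb
  -- modulus of the fraction
  have hfrac : ‖(k : ℂ) ^ 2 / Complex.mk R S‖
      ≤ k ^ 2 / (3 / 4 * (k * t * (a - k * t))) := by
    rw [norm_div, norm_pow, Complex.norm_real, Real.norm_of_nonneg hk.le]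
    exact div_le_div_of_nonneg_left (by positivity) (by positivity) hzlb
  -- MVT bound on the rpow difference
  set X : ℝ := 1 + (2 * k * t - a) ^ 2 + c ^ 2 with hX
  set Y : ℝ := 1 + a ^ 2 + c ^ 2 with hY
  have hXpos : 0 < X := by positivity
  have hXY : X ≤ Y := by
    have : (2 * k * t - a) ^ 2 ≤ a ^ 2 := by nlinarith
    rw [hX, hY]; linarith
  have hXlb : k ^ 2 * t ^ 2 / 4 ≤ X := by nlinarith
  have hklb : (0:ℝ) < k ^ 2 * t ^ 2 / 4 := by positivity
  have hMa : |X ^ s - Y ^ s| = Y ^ s - X ^ s := by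
    rw [abs_sub_comm, abs_of_nonneg (sub_nonneg.mpr (Real.rpow_le_rpow hXpos.le hXY hs))]
  have hM : |X ^ s - Y ^ s|
      ≤ s * (k ^ 2 * t ^ 2 / 4) ^ (s - 1) * (4 * (k * t * (a - k * t))) := by
    rw [hMa]
    have h1 : Y ^ s - X ^ s ≤ s * X ^ (s - 1) * (Y - X) :=
      mvt_rpow hXpos hXY hs (by linarith)
    have h2 : X ^ (s - 1) ≤ (k ^ 2 * t ^ 2 / 4) ^ (s - 1) :=
      Real.rpow_le_rpow_of_nonpos hklb hXlb (by linarith)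
    have h3 : Y - X = 4 * (k * t * (a - k * t)) := by rw [hX, hY]; ring
    calc Y ^ s - X ^ s ≤ s * X ^ (s - 1) * (Y - X) := h1
    _ ≤ s * (k ^ 2 * t ^ 2 / 4) ^ (s - 1) * (Y - X) := by
        have hYX : 0 ≤ Y - X := by linarith
        have := mul_le_mul_of_nonneg_left h2 hs
        nlinarith [mul_pos hkt hδ]
    _ = s * (k ^ 2 * t ^ 2 / 4) ^ (s - 1) * (4 * (k * t * (a - k * t))) := by rw [h3]
  -- assemble
  rw [hzmk]
  have habsnn : 0 ≤ ‖(k : ℂ) ^ 2 / Complex.mk R S‖ := norm_nonneg _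
  have hMnn : 0 ≤ |X ^ s - Y ^ s| := abs_nonneg _
  have step1 : (2 * k * t / a - 1) ^ (d - 2) * ‖(k : ℂ) ^ 2 / Complex.mk R S‖
        * |X ^ s - Y ^ s|
      ≤ (k ^ 2 / (3 / 4 * (k * t * (a - k * t))))
        * (s * (k ^ 2 * t ^ 2 / 4) ^ (s - 1) * (4 * (k * t * (a - k * t)))) := by
    calc (2 * k * t / a - 1) ^ (d - 2) * ‖(k : ℂ) ^ 2 / Complex.mk R S‖
        * |X ^ s - Y ^ s|
        ≤ 1 * ‖(k : ℂ) ^ 2 / Complex.mk R S‖ * |X ^ s - Y ^ s| := by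
          gcongr
      _ = ‖(k : ℂ) ^ 2 / Complex.mk R S‖ * |X ^ s - Y ^ s| := by ring
      _ ≤ (k ^ 2 / (3 / 4 * (k * t * (a - k * t))))
          * (s * (k ^ 2 * t ^ 2 / 4) ^ (s - 1) * (4 * (k * t * (a - k * t)))) := by
          apply mul_le_mul hfrac hM hMnn (by positivity)
  -- rpow algebra for the right-hand side
  have ek : ((k ^ 2 : ℝ)) ^ (s - 1) = k ^ (2 * s - 2) := by
    rw [← Real.rpow_natCast k 2, ← Real.rpow_mul hk.le]
    congr 1; push_cast; ring
  have et : ((t ^ 2 : ℝ)) ^ (s - 1) = t ^ (2 * s - 2) := by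
    rw [← Real.rpow_natCast t 2, ← Real.rpow_mul ht.le]
    congr 1; push_cast; ring
  have ek2 : k ^ (2 * s - 2) * k ^ 2 = k ^ (2 * s) := by
    rw [← Real.rpow_natCast k 2, ← Real.rpow_add hk]
    congr 1; push_cast; ring
  have key : k ^ 2 * ((k ^ 2 * t ^ 2 / 4 : ℝ)) ^ (s - 1)
      = (4:ℝ) ^ (1 - s) * (k ^ (2 * s) * t ^ (2 * s - 2)) := by
    rw [Real.div_rpow (by positivity) (by norm_num : (0:ℝ) ≤ 4),
      Real.mul_rpow (by positivity) (by positivity), ek, et, div_eq_mul_inv,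
      ← Real.rpow_neg (by norm_num : (0:ℝ) ≤ 4), neg_sub, ← ek2]
    ring
  have h4le : (4:ℝ) ^ (1 - s) ≤ 4 := by
    calc (4:ℝ) ^ (1 - s) ≤ (4:ℝ) ^ (1:ℝ) :=
      Real.rpow_le_rpow_of_exponent_le (by norm_num) (by linarith)
    _ = 4 := Real.rpow_one 4
  have h4nn : (0:ℝ) ≤ (4:ℝ) ^ (1 - s) := Real.rpow_nonneg (by norm_num) _
  have hQpos : 0 < k ^ (2 * s) * t ^ (2 * s - 2) :=
    mul_pos (Real.rpow_pos_of_pos hk _) (Real.rpow_pos_of_pos ht _)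
  have step2 : (k ^ 2 / (3 / 4 * (k * t * (a - k * t))))
        * (s * (k ^ 2 * t ^ 2 / 4) ^ (s - 1) * (4 * (k * t * (a - k * t))))
      ≤ 32 * k ^ (2 * s) * t ^ (2 * s - 2) := by
    have hne : (k * t * (a - k * t)) ≠ 0 := by positivity
    have e1 : (k ^ 2 / (3 / 4 * (k * t * (a - k * t))))
        * (s * (k ^ 2 * t ^ 2 / 4) ^ (s - 1) * (4 * (k * t * (a - k * t))))
        = 16 / 3 * s * (k ^ 2 * ((k ^ 2 * t ^ 2 / 4 : ℝ)) ^ (s - 1)) := by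
      field_simp
      ring
    rw [e1, key]
    have hsP : s * (4:ℝ) ^ (1 - s) ≤ 2 := by
      calc s * (4:ℝ) ^ (1 - s) ≤ (1/2) * (4:ℝ) ^ (1 - s) :=
        mul_le_mul_of_nonneg_right hs' h4nn
      _ ≤ (1/2) * 4 := by linarith
      _ = 2 := by norm_num
    have h5 := mul_le_mul_of_nonneg_right hsP hQpos.le
    nlinarith [h5, hQpos]
  calc (2 * k * t / a - 1) ^ (d - 2) * ‖(k : ℂ) ^ 2 / Complex.mk R S‖
      * |X ^ s - Y ^ s|
      ≤ (k ^ 2 / (3 / 4 * (k * t * (a - k * t))))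
        * (s * (k ^ 2 * t ^ 2 / 4) ^ (s - 1) * (4 * (k * t * (a - k * t)))) := step1
    _ ≤ 32 * k ^ (2 * s) * t ^ (2 * s - 2) := step2
end
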